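/- Let L be a finite distributive lattice, K a field, and I_L ⊆ K[L] the ideal generated by the basic binomials ab − (a∧b)(a∨b). Then I_L is a prime ideal. -/

import Mathlib

open MvPolynomial

noncomputable section HibiAux
open scoped Classical

variable {L : Type*} [DistribLattice L] [Fintype L] {K : Type*} [Field K]

/-- Birkhoff representation as a lattice hom to finsets of sup-irreducibles. -/
def hibiB : LatticeHom L (Finset {p : L // SupIrred p}) := LatticeHom.birkhoffFinset

lemma hibiB_mono {a b : L} (h : a ≤ b) : hibiB a ⊆ hibiB b :=
  (OrderHomClass.mono (hibiB (L := L))) h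

lemma hibiB_inj : Function.Injective (hibiB (L := L)) :=
  LatticeHom.birkhoffFinset_injective

/-- Exponent vector of a variable: marker `none` plus Birkhoff indicator. -/
def hibiE1 (a : L) : Option {p : L // SupIrred p} →₀ ℕ :=
  Finsupp.equivFunOnFinite.symm fun o =>
    Option.elim o 1 fun p => if p ∈ hibiB a then 1 else 0

lemma hibiE1_apply (a : L) (o : Option {p : L // SupIrred p}) :
    hibiE1 a o = Option.elim o 1 fun p => if p ∈ hibiB a then 1 else 0 :=
  congrFun (Finsupp.equivFunOnFinite.apply_symm_apply
    (fun o => Option.elim o 1 fun p => if p ∈ hibiB a then 1 else 0)) o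

lemma hibiE1_none (a : L) : hibiE1 a none = 1 := hibiE1_apply a none

lemma hibiE1_some (a : L) (p : {p : L // SupIrred p}) :
    hibiE1 a (some p) = if p ∈ hibiB a then 1 else 0 := hibiE1_apply a (some p)

lemma hibiE1_add (a b : L) : hibiE1 a + hibiE1 b = hibiE1 (a ⊓ b) + hibiE1 (a ⊔ b) := by
  ext o
  rcases o with _ | p
  · simp [hibiE1_none]
  · simp only [Finsupp.add_apply, hibiE1_some]
    have hinf : hibiB (a ⊓ b) = hibiB a ∩ hibiB b := by simp [hibiB]
    have hsup : hibiB (a ⊔ b) = hibiB a ∪ hibiB b := by simp [hibiB]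
    rw [hinf, hsup]
    by_cases h1 : p ∈ hibiB a <;> by_cases h2 : p ∈ hibiB b <;>
      simp [Finset.mem_inter, Finset.mem_union, h1, h2]

/-- Exponent vector of a multiset of variables. -/
def hibiE (m : Multiset L) : Option {p : L // SupIrred p} →₀ ℕ := (m.map hibiE1).sum

@[simp] lemma hibiE_zero : hibiE (0 : Multiset L) = 0 := rfl

@[simp] lemma hibiE_cons (a : L) (m : Multiset L) :
    hibiE (a ::ₘ m) = hibiE1 a + hibiE m := by
  simp [hibiE]

lemma hibiE_apply (m : Multiset L) (o : Option {p : L // SupIrred p}) :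
    hibiE m o = (m.map fun a => hibiE1 a o).sum := by
  induction m using Multiset.induction_on with
  | empty => simp
  | cons a s ih => simp [ih]

/-- The toric map. -/
def hibiPhi : MvPolynomial L K →+* MvPolynomial (Option {p : L // SupIrred p}) K :=
  eval₂Hom C fun a => monomial (hibiE1 a) 1

lemma hibiPhi_X (a : L) : hibiPhi (K := K) (X a) = monomial (hibiE1 a) 1 := by
  simp [hibiPhi]

/-- Monomial attached to a multiset. -/
def hibiM (K : Type*) [Field K] (m : Multiset L) : MvPolynomial L K := (m.map X).prod

@[simp] lemma hibiM_zero : hibiM K (0 : Multiset L) = 1 := rfl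

@[simp] lemma hibiM_cons (a : L) (m : Multiset L) :
    hibiM K (a ::ₘ m) = X a * hibiM K m := by simp [hibiM]

lemma hibiPhi_hibiM (m : Multiset L) :
    hibiPhi (K := K) (hibiM K m) = monomial (hibiE m) 1 := by
  induction m using Multiset.induction_on with
  | empty => simp [monomial_zero', map_one]
  | cons a s ih =>
      rw [hibiM_cons, map_mul, hibiPhi_X, ih, monomial_mul, hibiE_cons, one_mul]

lemma hibiM_toMultiset (d : L →₀ ℕ) : hibiM K d.toMultiset = monomial d 1 := by
  induction d using Finsupp.induction with
  | zero => simp [monomial_zero', map_one]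
  | single_add a n f _ _ ih =>
      rw [Finsupp.toMultiset_add, Finsupp.toMultiset_single]
      have : hibiM K (n • ({a} : Multiset L) + f.toMultiset)
          = (X a) ^ n * hibiM K f.toMultiset := by
        simp [hibiM, Multiset.map_nsmul, Multiset.prod_nsmul]
      rw [this, ih, ← one_mul (1 : K), ← monomial_mul, X_pow_eq_monomial, one_mul]

/-- The Hibi ideal. -/
def hibiI (L K : Type*) [DistribLattice L] [Fintype L] [Field K] : Ideal (MvPolynomial L K) :=
  Ideal.span {f : MvPolynomial L K | ∃ a b : L, f = X a * X b - X (a ⊓ b) * X (a ⊔ b)}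

lemma hibiGen_mem (a b : L) :
    (X a * X b - X (a ⊓ b) * X (a ⊔ b) : MvPolynomial L K) ∈ hibiI L K :=
  Ideal.subset_span ⟨a, b, rfl⟩

lemma hibiI_le_ker : hibiI L K ≤ RingHom.ker (hibiPhi (K := K) (L := L)) := by
  rw [hibiI, Ideal.span_le]
  rintro f ⟨a, b, rfl⟩
  simp only [SetLike.mem_coe, RingHom.mem_ker, map_sub, map_mul, hibiPhi_X, monomial_mul,
    one_mul]
  rw [hibiE1_add a b, sub_self]

lemma hibi_natlem : ∀ i u x y t : ℕ, 0 < t → x = i + t → u = y + t → i < y →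
    x ^ 2 + y ^ 2 < i ^ 2 + u ^ 2 := by
  intro i u x y t h1 h2 h3 h4; subst h2; subst h3; nlinarith

/-- Straightening measure. -/
def hibiMu (m : Multiset L) : ℕ :=
  (m.map fun a => Fintype.card {p : L // SupIrred p} ^ 2 - (hibiB a).card ^ 2).sum

lemma hibiMu_lt {a b : L} (hab : ¬ a ≤ b) (hba : ¬ b ≤ a) (s : Multiset L) :
    hibiMu ((a ⊓ b) ::ₘ (a ⊔ b) ::ₘ s) < hibiMu (a ::ₘ b ::ₘ s) := by
  have key : (hibiB a).card ^ 2 + (hibiB b).card ^ 2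
      < (hibiB (a ⊓ b)).card ^ 2 + (hibiB (a ⊔ b)).card ^ 2 := by
    have hinf : hibiB (a ⊓ b) = hibiB a ∩ hibiB b := by simp [hibiB]
    have hsup : hibiB (a ⊔ b) = hibiB a ∪ hibiB b := by simp [hibiB]
    have hia : (hibiB a ∩ hibiB b).card < (hibiB a).card := by
      apply Finset.card_lt_card
      refine ⟨Finset.inter_subset_left, ?_⟩
      intro hle
      have hsub : hibiB a ⊆ hibiB b := fun x hx => (Finset.mem_inter.1 (hle hx)).2
      have h1 : hibiB a ⊆ hibiB (a ⊓ b) := by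
        rw [hinf]; exact fun x hx => Finset.mem_inter.2 ⟨hx, hsub hx⟩
      have h2 := hibiB_mono (inf_le_left (a := a) (b := b))
      have heq : a ⊓ b = a := hibiB_inj (Finset.Subset.antisymm h2 h1)
      exact hab (inf_eq_left.1 heq)
    have hib : (hibiB a ∩ hibiB b).card < (hibiB b).card := by
      apply Finset.card_lt_card
      refine ⟨Finset.inter_subset_right, ?_⟩
      intro hle
      have hsub : hibiB b ⊆ hibiB a := fun x hx => (Finset.mem_inter.1 (hle hx)).1
      have h1 : hibiB b ⊆ hibiB (a ⊓ b) := by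
        rw [hinf]; exact fun x hx => Finset.mem_inter.2 ⟨hsub hx, hx⟩
      have h2 := hibiB_mono (inf_le_right (a := a) (b := b))
      have heq : a ⊓ b = b := hibiB_inj (Finset.Subset.antisymm h2 h1)
      exact hba (inf_eq_right.1 heq)
    have hsum : (hibiB a ∩ hibiB b).card + (hibiB a ∪ hibiB b).card
        = (hibiB a).card + (hibiB b).card := Finset.card_inter_add_card_union _ _
    rw [hinf, hsup]
    exact hibi_natlem _ _ _ _ ((hibiB a).card - (hibiB a ∩ hibiB b).card)
      (by omega) (by omega) (by omega) hib
  have hca : (hibiB a).card ^ 2 ≤ Fintype.card {p : L // SupIrred p} ^ 2 :=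
    Nat.pow_le_pow_left (Finset.card_le_univ _) 2
  have hcb : (hibiB b).card ^ 2 ≤ Fintype.card {p : L // SupIrred p} ^ 2 :=
    Nat.pow_le_pow_left (Finset.card_le_univ _) 2
  have hci : (hibiB (a ⊓ b)).card ^ 2 ≤ Fintype.card {p : L // SupIrred p} ^ 2 :=
    Nat.pow_le_pow_left (Finset.card_le_univ _) 2
  have hcu : (hibiB (a ⊔ b)).card ^ 2 ≤ Fintype.card {p : L // SupIrred p} ^ 2 :=
    Nat.pow_le_pow_left (Finset.card_le_univ _) 2
  simp only [hibiMu, Multiset.map_cons, Multiset.sum_cons]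
  omega

/-- Every monomial is congruent mod `hibiI` to a chain monomial. -/
lemma hibi_chainify : ∀ (N : ℕ) (m : Multiset L), hibiMu m < N →
    ∃ n : Multiset L, (∀ a ∈ n, ∀ b ∈ n, a ≤ b ∨ b ≤ a) ∧
      hibiM K m - hibiM K n ∈ hibiI L K := by
  intro N
  induction N with
  | zero => intro m hm; omega
  | succ N ih =>
      intro m hm
      by_cases hch : ∀ a ∈ m, ∀ b ∈ m, a ≤ b ∨ b ≤ a
      · exact ⟨m, hch, by simp [Ideal.zero_mem]⟩
      · push_neg at hch
        obtain ⟨a, ha, b, hb, hab, hba⟩ := hch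
        have hne : a ≠ b := fun h => hab (le_of_eq h)
        have hbe : b ∈ m.erase a := (Multiset.mem_erase_of_ne (Ne.symm hne)).2 hb
        have hdecomp : m = a ::ₘ b ::ₘ ((m.erase a).erase b) := by
          rw [Multiset.cons_erase hbe, Multiset.cons_erase ha]
        set s := (m.erase a).erase b with hs
        have hlt : hibiMu ((a ⊓ b) ::ₘ (a ⊔ b) ::ₘ s) < N := by
          have := hibiMu_lt hab hba s
          rw [← hdecomp] at this
          omega
        obtain ⟨n, hn, hmem⟩ := ih _ hlt
        refine ⟨n, hn, ?_⟩
        have hgen : hibiM K m - hibiM K ((a ⊓ b) ::ₘ (a ⊔ b) ::ₘ s) ∈ hibiI L K := by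
          rw [hdecomp]
          have : hibiM K (a ::ₘ b ::ₘ s) - hibiM K ((a ⊓ b) ::ₘ (a ⊔ b) ::ₘ s)
              = (X a * X b - X (a ⊓ b) * X (a ⊔ b)) * hibiM K s := by
            simp [hibiM_cons]; ring
          rw [this]
          exact Ideal.mul_mem_right _ _ (hibiGen_mem a b)
        have := Ideal.add_mem _ hgen hmem
        simpa using this

lemma hibiE_none (m : Multiset L) : hibiE m none = Multiset.card m := by
  rw [hibiE_apply]
  induction m using Multiset.induction_on with
  | empty => simp
  | cons a s ih => simp [hibiE1_none, ih]; omega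

lemma hibi_exists_max : ∀ (m : Multiset L), m ≠ 0 →
    (∀ a ∈ m, ∀ b ∈ m, a ≤ b ∨ b ≤ a) → ∃ t ∈ m, ∀ x ∈ m, x ≤ t := by
  intro m
  induction m using Multiset.induction_on with
  | empty => intro h; exact absurd rfl h
  | cons a s ih =>
      intro _ hch
      by_cases hs : s = 0
      · subst hs
        exact ⟨a, Multiset.mem_cons_self a 0, by simp⟩
      · obtain ⟨t, htm, htmax⟩ := ih hs fun x hx y hy =>
          hch x (Multiset.mem_cons_of_mem hx) y (Multiset.mem_cons_of_mem hy)
        rcases hch a (Multiset.mem_cons_self a s) t (Multiset.mem_cons_of_mem htm) with h | h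
        · exact ⟨t, Multiset.mem_cons_of_mem htm, by
            intro x hx
            rcases Multiset.mem_cons.1 hx with rfl | hx
            · exact h
            · exact htmax x hx⟩
        · exact ⟨a, Multiset.mem_cons_self a s, by
            intro x hx
            rcases Multiset.mem_cons.1 hx with rfl | hx
            · exact le_rfl
            · exact (htmax x hx).trans h⟩

lemma hibiE_pos_iff (m : Multiset L) (p : {p : L // SupIrred p}) :
    0 < hibiE m (some p) ↔ ∃ a ∈ m, p ∈ hibiB a := by
  rw [hibiE_apply]
  constructor
  · intro h
    by_contra hc
    push_neg at hc
    rw [Multiset.sum_eq_zero] at h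
    · exact lt_irrefl 0 h
    · intro x hx
      obtain ⟨a, ha, rfl⟩ := Multiset.mem_map.1 hx
      simp [hibiE1_some, hc a ha]
  · rintro ⟨a, ha, hp⟩
    have h1 : (1 : ℕ) ≤ (m.map fun a => hibiE1 a (some p)).sum := by
      apply Multiset.single_le_sum (fun x _ => Nat.zero_le x)
      exact Multiset.mem_map.2 ⟨a, ha, by simp [hibiE1_some, hp]⟩
    omega

lemma hibiE_inj : ∀ (k : ℕ) (m n : Multiset L), Multiset.card m = k →
    (∀ a ∈ m, ∀ b ∈ m, a ≤ b ∨ b ≤ a) → (∀ a ∈ n, ∀ b ∈ n, a ≤ b ∨ b ≤ a) →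
    hibiE m = hibiE n → m = n := by
  intro k
  induction k with
  | zero =>
      intro m n hcard _ _ hE
      have hn : Multiset.card n = 0 := by
        have := congrArg (fun f => f none) hE
        simp only [hibiE_none] at this
        omega
      rw [Multiset.card_eq_zero.1 hcard, Multiset.card_eq_zero.1 hn]
  | succ k ih =>
      intro m n hcard hm hn hE
      have hcn : Multiset.card n = k + 1 := by
        have := congrArg (fun f => f none) hE
        simp only [hibiE_none] at this
        omega
      obtain ⟨tm, htmm, htmmax⟩ := hibi_exists_max m
        (by intro h; rw [h] at hcard; simp at hcard) hm
      obtain ⟨tn, htnn, htnmax⟩ := hibi_exists_max n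
        (by intro h; rw [h] at hcn; simp at hcn) hn
      have hBt : hibiB tm = hibiB tn := by
        ext p
        have h1 : p ∈ hibiB tm ↔ 0 < hibiE m (some p) := by
          rw [hibiE_pos_iff]
          constructor
          · intro h; exact ⟨tm, htmm, h⟩
          · rintro ⟨a, ha, hp⟩; exact hibiB_mono (htmmax a ha) hp
        have h2 : p ∈ hibiB tn ↔ 0 < hibiE n (some p) := by
          rw [hibiE_pos_iff]
          constructor
          · intro h; exact ⟨tn, htnn, h⟩
          · rintro ⟨a, ha, hp⟩; exact hibiB_mono (htnmax a ha) hp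
        rw [h1, h2, hE]
      have ht : tm = tn := hibiB_inj hBt
      subst ht
      have hm' : m = tm ::ₘ m.erase tm := (Multiset.cons_erase htmm).symm
      have hn' : n = tm ::ₘ n.erase tm := (Multiset.cons_erase htnn).symm
      have hEe : hibiE (m.erase tm) = hibiE (n.erase tm) := by
        have h1 : hibiE m = hibiE1 tm + hibiE (m.erase tm) := by
          conv_lhs => rw [hm']
          rw [hibiE_cons]
        have h2 : hibiE n = hibiE1 tm + hibiE (n.erase tm) := by
          conv_lhs => rw [hn']
          rw [hibiE_cons]
        rw [h1, h2] at hE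
        exact add_left_cancel hE
      have herase : m.erase tm = n.erase tm := by
        apply ih _ _ ?_ ?_ ?_ hEe
        · have := congrArg Multiset.card hm'
          simp at this
          omega
        · intro a ha b hb
          exact hm a (Multiset.mem_of_mem_erase ha) b (Multiset.mem_of_mem_erase hb)
        · intro a ha b hb
          exact hn a (Multiset.mem_of_mem_erase ha) b (Multiset.mem_of_mem_erase hb)
      rw [hm', hn', herase]

lemma hibiPhi_C (c : K) : hibiPhi (K := K) (L := L) (C c) = C c := by
  simp [hibiPhi]

lemma hibi_ker_le : RingHom.ker (hibiPhi (K := K) (L := L)) ≤ hibiI L K := by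
  intro f hf
  rw [RingHom.mem_ker] at hf
  have hchoice : ∀ d : L →₀ ℕ, ∃ n : Multiset L, (∀ a ∈ n, ∀ b ∈ n, a ≤ b ∨ b ≤ a) ∧
      hibiM K d.toMultiset - hibiM K n ∈ hibiI L K :=
    fun d => hibi_chainify (hibiMu d.toMultiset + 1) _ (Nat.lt_succ_self _)
  choose ch hch1 hch2 using hchoice
  set g : MvPolynomial L K := ∑ d ∈ f.support, C (coeff d f) * hibiM K (ch d) with hg
  have hfg : f - g ∈ hibiI L K := by
    have hfeq : f - g
        = ∑ d ∈ f.support, C (coeff d f) * (hibiM K d.toMultiset - hibiM K (ch d)) := by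
      rw [sub_eq_iff_eq_add, hg, ← Finset.sum_add_distrib]
      conv_lhs => rw [← support_sum_monomial_coeff f]
      apply Finset.sum_congr rfl
      intro d _
      rw [hibiM_toMultiset, mul_sub, sub_add_cancel, C_mul_monomial, mul_one]
    rw [hfeq]
    exact Ideal.sum_mem _ fun d _ => Ideal.mul_mem_left _ _ (hch2 d)
  have hgker : hibiPhi (K := K) g = 0 := by
    have h1 := hibiI_le_ker hfg
    rw [RingHom.mem_ker, map_sub, hf, zero_sub, neg_eq_zero] at h1
    exact h1
  have hgexp : hibiPhi (K := K) g = ∑ d ∈ f.support, monomial (hibiE (ch d)) (coeff d f) := by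
    rw [hg, map_sum]
    apply Finset.sum_congr rfl
    intro d _
    rw [map_mul, hibiPhi_C, hibiPhi_hibiM, C_mul_monomial, mul_one]
  have hsum0 : ∀ d0 ∈ f.support,
      ∑ d ∈ f.support.filter (fun d => ch d = ch d0), coeff d f = 0 := by
    intro d0 _
    have hco := congrArg (MvPolynomial.coeff (hibiE (ch d0))) hgker
    rw [hgexp] at hco
    rw [MvPolynomial.coeff_sum] at hco
    simp only [MvPolynomial.coeff_monomial, MvPolynomial.coeff_zero] at hco
    rw [← hco, Finset.sum_filter]
    apply Finset.sum_congr rfl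
    intro d _
    by_cases h : ch d = ch d0
    · simp [h]
    · have hne : hibiE (ch d) ≠ hibiE (ch d0) := fun hEeq =>
        h (hibiE_inj (Multiset.card (ch d)) _ _ rfl (hch1 d) (hch1 d0) hEeq)
      simp [h, hne]
  have hgzero : g = 0 := by
    rw [hg, ← Finset.sum_fiberwise_of_maps_to
      (fun d hd => Finset.mem_image_of_mem ch hd)
      (f := fun d => C (coeff d f) * hibiM K (ch d))]
    apply Finset.sum_eq_zero
    intro n hn
    obtain ⟨d0, hd0, rfl⟩ := Finset.mem_image.1 hn
    have : ∀ d ∈ f.support.filter (fun d => ch d = ch d0),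
        C (coeff d f) * hibiM K (ch d) = C (coeff d f) * hibiM K (ch d0) := by
      intro d hd
      rw [(Finset.mem_filter.1 hd).2]
    rw [Finset.sum_congr rfl this, ← Finset.sum_mul, ← map_sum, hsum0 d0 hd0, map_zero,
      zero_mul]
  have : f = f - g := by rw [hgzero, sub_zero]
  rw [this]
  exact hfg

end HibiAux

/-- For a finite distributive lattice `L`, the ideal `I_L` of `K[L]` generated
by the basic binomials is prime. -/
theorem hibi_ideal_prime {L : Type*} [DistribLattice L] [Fintype L]
    {K : Type*} [Field K] :
    (Ideal.span {f : MvPolynomial L K |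
      ∃ a b : L, f = X a * X b - X (a ⊓ b) * X (a ⊔ b)}).IsPrime := by
  show (hibiI L K).IsPrime
  rw [le_antisymm (hibiI_le_ker (L := L) (K := K)) (hibi_ker_le (L := L) (K := K))]
  exact RingHom.ker_isPrime _
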